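/- For real numbers 0 < ε₁ < ε₂ < 1/2, define φ(ε₁,ε₂) = ln((1-ε₁)/(1-ε₂)) / ln(((1-ε₁)ε₂)/((1-ε₂)ε₁)). Then ε₁ < φ(ε₁,ε₂) < ε₂. -/

import Mathlib

lemma kl_pos (p q : ℝ) (hp0 : 0 < p) (hp1 : p < 1) (hq0 : 0 < q) (hq1 : q < 1)
    (hne : p ≠ q) :
    0 < p * Real.log (p / q) + (1 - p) * Real.log ((1 - p) / (1 - q)) := by
  have h1 : Real.log (q / p) < q / p - 1 :=
    Real.log_lt_sub_one_of_pos (by positivity) (by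
      intro h; apply hne; field_simp at h; linarith)
  have h2 : Real.log ((1 - q) / (1 - p)) < (1 - q) / (1 - p) - 1 :=
    Real.log_lt_sub_one_of_pos (div_pos (by linarith) (by linarith)) (by
      intro h
      apply hne
      have hp1' : (1 : ℝ) - p ≠ 0 := by linarith
      field_simp at h; linarith)
  have e1 : Real.log (p / q) = - Real.log (q / p) := by
    rw [← Real.log_inv]; congr 1; field_simp
  have e2 : Real.log ((1 - p) / (1 - q)) = - Real.log ((1 - q) / (1 - p)) := by
    rw [← Real.log_inv]; congr 1
    rw [inv_div]
  rw [e1, e2]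
  have hd1 : q / p - 1 = (q - p) / p := by field_simp
  have hp1' : (1 : ℝ) - p ≠ 0 := by linarith
  have hd2 : (1 - q) / (1 - p) - 1 = (p - q) / (1 - p) := by
    field_simp; ring
  rw [hd1] at h1; rw [hd2] at h2
  have k1 : p * Real.log (q / p) < q - p := by
    have := (mul_lt_mul_of_pos_left h1 hp0)
    rwa [mul_div_cancel₀ _ (ne_of_gt hp0)] at this
  have k2 : (1 - p) * Real.log ((1 - q) / (1 - p)) < p - q := by
    have h1p : (0:ℝ) < 1 - p := by linarith
    have := (mul_lt_mul_of_pos_left h2 h1p)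
    rwa [mul_div_cancel₀ _ (ne_of_gt h1p)] at this
  nlinarith

theorem phi_between (ε₁ ε₂ : ℝ) (h0 : 0 < ε₁) (h12 : ε₁ < ε₂) (h2 : ε₂ < 1/2) :
    ε₁ < Real.log ((1 - ε₁) / (1 - ε₂)) / Real.log (((1 - ε₁) * ε₂) / ((1 - ε₂) * ε₁)) ∧
    Real.log ((1 - ε₁) / (1 - ε₂)) / Real.log (((1 - ε₁) * ε₂) / ((1 - ε₂) * ε₁)) < ε₂ := by
  have h1e2 : (0:ℝ) < 1 - ε₂ := by linarith
  have h1e1 : (0:ℝ) < 1 - ε₁ := by linarith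
  set A := Real.log ((1 - ε₁) / (1 - ε₂)) with hA
  set B := Real.log (ε₂ / ε₁) with hB
  have hAB : Real.log (((1 - ε₁) * ε₂) / ((1 - ε₂) * ε₁)) = A + B := by
    rw [hA, hB]
    rw [show ((1 - ε₁) * ε₂) / ((1 - ε₂) * ε₁) = ((1 - ε₁) / (1 - ε₂)) * (ε₂ / ε₁) by
      field_simp]
    rw [Real.log_mul (ne_of_gt (div_pos h1e1 h1e2)) (ne_of_gt (div_pos (by linarith) h0))]
  have hApos : 0 < A := Real.log_pos ((one_lt_div h1e2).mpr (by linarith))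
  have hBpos : 0 < B := Real.log_pos ((one_lt_div h0).mpr h12)
  have kl1 := kl_pos ε₁ ε₂ h0 (by linarith) (by linarith) (by linarith) (ne_of_lt h12)
  have kl2 := kl_pos ε₂ ε₁ (by linarith) (by linarith) h0 (by linarith) (ne_of_gt h12)
  -- rewrite kl1, kl2 in terms of A, B
  have e1 : Real.log (ε₁ / ε₂) = -B := by
    rw [hB, ← Real.log_inv]; congr 1; rw [inv_div]
  have e2 : Real.log ((1 - ε₂) / (1 - ε₁)) = -A := by
    rw [hA, ← Real.log_inv]; congr 1; rw [inv_div]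
  rw [e1] at kl1
  rw [e2] at kl2
  -- kl1 : 0 < ε₁ * (-B) + (1 - ε₁) * A
  -- kl2 : 0 < ε₂ * B + (1 - ε₂) * (-A)
  rw [hAB]
  have hD : 0 < A + B := by linarith
  constructor
  · rw [lt_div_iff₀ hD]; nlinarith
  · rw [div_lt_iff₀ hD]; nlinarith
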